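/- Let (b_n)_{n≥1} be a positive, monotonically increasing sequence of reals such that for every t with 0 < t < 1, b_{⌊nt⌋}/b_n → t as n → ∞. Then (b_n) is asymptotically equidistributed modulo one, i.e. for all 0 ≤ α < β ≤ 1, (1/n)·#{r : 1 ≤ r ≤ n, α ≤ b_r/b_n ≤ β} → β − α as n → ∞. -/

import Mathlib

open Filter Finset

lemma key_count (b : ℕ → ℝ) (hbpos : ∀ n, 1 ≤ n → 0 < b n)
    (hbmono : MonotoneOn b (Set.Ici 1))
    (hratio : ∀ t : ℝ, 0 < t → t < 1 →
      Tendsto (fun n : ℕ => b ⌊(n : ℝ) * t⌋₊ / b n) atTop (nhds t))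
    (t : ℝ) (ht0 : 0 < t) (ht1 : t < 1) (Q : ℝ → Prop) [DecidablePred Q]
    (hQ1 : ∀ x, x < t → Q x) (hQ2 : ∀ x, Q x → x ≤ t) :
    Tendsto (fun n : ℕ =>
      (((Finset.Icc 1 n).filter fun r => Q (b r / b n)).card : ℝ) / n) atTop (nhds t) := by
  rw [tendsto_order]
  constructor
  · intro a ha
    set s := (max a 0 + t) / 2 with hsdef
    have hmax0 : 0 ≤ max a 0 := le_max_right a 0
    have hmaxt : max a 0 < t := max_lt ha ht0
    have hs0 : 0 < s := by simp only [hsdef]; linarith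
    have hst : s < t := by simp only [hsdef]; linarith
    have hs1 : s < 1 := lt_trans hst ht1
    have has : a < s := lt_of_le_of_lt (le_max_left a 0) (by simp only [hsdef]; linarith)
    have E1 : ∀ᶠ n : ℕ in atTop, b ⌊(n : ℝ) * s⌋₊ / b n < t :=
      (hratio s hs0 hs1).eventually_lt_const hst
    have E2 : ∀ᶠ n : ℕ in atTop, (1:ℝ) ≤ (n:ℝ) * s :=
      (tendsto_natCast_atTop_atTop.atTop_mul_const hs0).eventually_ge_atTop 1
    have E3 : ∀ᶠ n : ℕ in atTop, (1:ℝ)/(s-a) < (n:ℝ) :=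
      tendsto_natCast_atTop_atTop.eventually_gt_atTop _
    filter_upwards [E1, E2, E3, eventually_ge_atTop 1] with n h1 h2 h3 h4
    have hn0 : (0:ℝ) < n := by exact_mod_cast Nat.lt_of_lt_of_le Nat.zero_lt_one h4
    have hbn : 0 < b n := hbpos n h4
    have hfl1 : 1 ≤ ⌊(n:ℝ)*s⌋₊ := Nat.le_floor (by exact_mod_cast h2)
    have hfln : ⌊(n:ℝ)*s⌋₊ ≤ n := by
      calc ⌊(n:ℝ)*s⌋₊ ≤ ⌊(n:ℝ)⌋₊ := Nat.floor_le_floor (by nlinarith)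
        _ = n := Nat.floor_natCast n
    have hsub : Finset.Icc 1 ⌊(n:ℝ)*s⌋₊ ⊆
        (Finset.Icc 1 n).filter fun r => Q (b r / b n) := by
      intro r hr
      rw [mem_Icc] at hr
      rw [mem_filter, mem_Icc]
      refine ⟨⟨hr.1, hr.2.trans hfln⟩, hQ1 _ ?_⟩
      have hbr : b r ≤ b ⌊(n:ℝ)*s⌋₊ :=
        hbmono (Set.mem_Ici.mpr hr.1) (Set.mem_Ici.mpr hfl1) hr.2
      calc b r / b n ≤ b ⌊(n:ℝ)*s⌋₊ / b n := by gcongr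
        _ < t := h1
    have hcard : ⌊(n:ℝ)*s⌋₊ ≤ ((Finset.Icc 1 n).filter fun r => Q (b r / b n)).card := by
      have := Finset.card_le_card hsub
      simpa [Nat.card_Icc] using this
    have h5 : (n:ℝ)*s - 1 < (⌊(n:ℝ)*s⌋₊:ℝ) := Nat.sub_one_lt_floor _
    have h6 : (⌊(n:ℝ)*s⌋₊:ℝ) ≤ (((Finset.Icc 1 n).filter fun r => Q (b r / b n)).card : ℝ) :=
      Nat.cast_le.2 hcard
    have h7 : 1 < (n:ℝ) * (s - a) := by
      rw [div_lt_iff₀ (sub_pos.2 has)] at h3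
      linarith
    rw [lt_div_iff₀ hn0]
    nlinarith
  · intro a ha
    set s := (t + min a 1) / 2 with hsdef
    have hmin : t < min a 1 := lt_min ha ht1
    have hs0 : 0 < s := by simp only [hsdef]; linarith
    have hst : t < s := by simp only [hsdef]; linarith
    have hs1 : s < 1 := by
      have := min_le_right a 1
      simp only [hsdef]; linarith
    have hsa : s < a := by
      have := min_le_left a 1
      simp only [hsdef]; linarith
    have E1 : ∀ᶠ n : ℕ in atTop, t < b ⌊(n : ℝ) * s⌋₊ / b n :=
      (hratio s hs0 hs1).eventually_const_lt hst
    have E2 : ∀ᶠ n : ℕ in atTop, (1:ℝ) ≤ (n:ℝ) * s :=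
      (tendsto_natCast_atTop_atTop.atTop_mul_const hs0).eventually_ge_atTop 1
    filter_upwards [E1, E2, eventually_ge_atTop 1] with n h1 h2 h4
    have hn0 : (0:ℝ) < n := by exact_mod_cast Nat.lt_of_lt_of_le Nat.zero_lt_one h4
    have hbn : 0 < b n := hbpos n h4
    have hfl1 : 1 ≤ ⌊(n:ℝ)*s⌋₊ := Nat.le_floor (by exact_mod_cast h2)
    have hsub : ((Finset.Icc 1 n).filter fun r => Q (b r / b n)) ⊆
        Finset.Icc 1 ⌊(n:ℝ)*s⌋₊ := by
      intro r hr
      rw [mem_filter, mem_Icc] at hr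
      obtain ⟨⟨hr1, hrn⟩, hQ⟩ := hr
      rw [mem_Icc]
      refine ⟨hr1, ?_⟩
      by_contra h
      push_neg at h
      have hble : b ⌊(n:ℝ)*s⌋₊ ≤ b r :=
        hbmono (Set.mem_Ici.mpr hfl1) (Set.mem_Ici.mpr hr1) h.le
      have : b ⌊(n:ℝ)*s⌋₊ / b n ≤ b r / b n := by gcongr
      have := hQ2 _ hQ
      linarith
    have hc : (((Finset.Icc 1 n).filter fun r => Q (b r / b n)).card : ℝ) ≤ (n:ℝ)*s := by
      have h5 : ((Finset.Icc 1 n).filter fun r => Q (b r / b n)).card ≤ ⌊(n:ℝ)*s⌋₊ := by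
        have := Finset.card_le_card hsub
        simpa [Nat.card_Icc] using this
      calc (((Finset.Icc 1 n).filter fun r => Q (b r / b n)).card : ℝ)
          ≤ (⌊(n:ℝ)*s⌋₊ : ℝ) := Nat.cast_le.2 h5
        _ ≤ (n:ℝ)*s := Nat.floor_le (by positivity)
    rw [div_lt_iff₀ hn0]
    nlinarith

/-- If `b` is a positive monotonically increasing sequence with
`b ⌊n*t⌋ / b n → t` for every `0 < t < 1`, then `b` is asymptotically equidistributed
modulo one. -/
theorem asymptotically_equidistributed_of_ratio_tendsto
    (b : ℕ → ℝ) (hbpos : ∀ n, 1 ≤ n → 0 < b n)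
    (hbmono : MonotoneOn b (Set.Ici 1))
    (hratio : ∀ t : ℝ, 0 < t → t < 1 →
      Tendsto (fun n : ℕ => b ⌊(n : ℝ) * t⌋₊ / b n) atTop (nhds t)) :
    ∀ α β : ℝ, 0 ≤ α → α < β → β ≤ 1 →
      Tendsto (fun n : ℕ =>
          (((Finset.Icc 1 n).filter fun r => α ≤ b r / b n ∧ b r / b n ≤ β).card : ℝ) / n)
        atTop (nhds (β - α)) := by
  intro α β hα hαβ hβ
  have hf1 : Tendsto (fun n : ℕ =>
      (((Finset.Icc 1 n).filter fun r => b r / b n ≤ β).card : ℝ) / n) atTop (nhds β) := by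
    rcases eq_or_lt_of_le hβ with hβ1 | hβ1
    · subst hβ1
      refine Tendsto.congr' ?_ tendsto_const_nhds
      filter_upwards [eventually_ge_atTop 1] with n h4
      have hn0 : (0:ℝ) < n := by exact_mod_cast Nat.lt_of_lt_of_le Nat.zero_lt_one h4
      have hbn : 0 < b n := hbpos n h4
      have : (Finset.Icc 1 n).filter (fun r => b r / b n ≤ (1:ℝ)) = Finset.Icc 1 n := by
        refine Finset.filter_true_of_mem ?_
        intro r hr
        rw [mem_Icc] at hr
        rw [div_le_one hbn]
        exact hbmono (Set.mem_Ici.mpr hr.1) (Set.mem_Ici.mpr h4) hr.2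
      rw [this, Nat.card_Icc]
      simp only [Nat.add_sub_cancel]
      rw [div_self (ne_of_gt hn0)]
    · exact key_count b hbpos hbmono hratio β (lt_of_le_of_lt hα hαβ) hβ1
        (fun x => x ≤ β) (fun x h => h.le) (fun x h => h)
  have hf2 : Tendsto (fun n : ℕ =>
      (((Finset.Icc 1 n).filter fun r => b r / b n < α).card : ℝ) / n) atTop (nhds α) := by
    rcases eq_or_lt_of_le hα with hα0 | hα0
    · subst hα0
      refine Tendsto.congr' ?_ tendsto_const_nhds
      filter_upwards [eventually_ge_atTop 1] with n h4
      have hbn : 0 < b n := hbpos n h4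
      have : (Finset.Icc 1 n).filter (fun r => b r / b n < (0:ℝ)) = ∅ := by
        refine Finset.filter_false_of_mem ?_
        intro r hr
        rw [mem_Icc] at hr
        have : 0 < b r / b n := div_pos (hbpos r hr.1) hbn
        linarith
      rw [this]
      simp
    · exact key_count b hbpos hbmono hratio α hα0 (lt_of_lt_of_le hαβ hβ)
        (fun x => x < α) (fun x h => h) (fun x h => h.le)
  refine Tendsto.congr' ?_ (hf1.sub hf2)
  filter_upwards [eventually_ge_atTop 1] with n h4
  have hsubset : (Finset.Icc 1 n).filter (fun r => b r / b n < α) ⊆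
      (Finset.Icc 1 n).filter (fun r => b r / b n ≤ β) := by
    intro r hr
    rw [mem_filter] at *
    exact ⟨hr.1, (hr.2.trans hαβ).le⟩
  have hset : (Finset.Icc 1 n).filter (fun r => α ≤ b r / b n ∧ b r / b n ≤ β)
      = (Finset.Icc 1 n).filter (fun r => b r / b n ≤ β) \
        (Finset.Icc 1 n).filter (fun r => b r / b n < α) := by
    ext r
    simp only [mem_filter, Finset.mem_sdiff, not_and, not_lt]
    constructor
    · rintro ⟨hr, h1, h2⟩
      exact ⟨⟨hr, h2⟩, fun _ => h1⟩
    · rintro ⟨⟨hr, h2⟩, h3⟩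
      exact ⟨hr, h3 hr, h2⟩
  rw [hset, Finset.card_sdiff_of_subset hsubset, Nat.cast_sub (Finset.card_le_card hsubset), sub_div]
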